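/- Let $A_1,\dots,A_k$ be pairwise disjoint finite sets with $|A_i|\le m$ for all $i$, $U=\bigcup_i A_i$, and let $v:2^U\to\mathbb{R}_{\ge 0}$ be monotone and submodular with $v(\emptyset)=0$. Let $S_i\subseteq A_i$ and $S=\bigcup_i S_i$, and suppose that for every $i$ and every $B\subseteq A_i$, $v(S)-v(S\setminus S_i) \ge \sum_{b\in B}\big(v(B\cup(S\setminus S_i))-v((B\setminus\{b\})\cup(S\setminus S_i))\big)$. Then $v(U)\le (H_m+1)\,v(S)$, where $H_m$ is the $m$-th harmonic number. -/
import Mathlib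


open Finset

private lemma poa_union_bound {α : Type*} [DecidableEq α] {k : ℕ}
    (v : Finset α → ℝ)
    (hmono : ∀ X Y : Finset α, X ⊆ Y → v X ≤ v Y)
    (hsub : ∀ X Y : Finset α, v X + v Y ≥ v (X ∪ Y) + v (X ∩ Y))
    (A : Fin k → Finset α) (X : Finset α) (I : Finset (Fin k)) :
    v (X ∪ I.biUnion A) ≤ v X + ∑ i ∈ I, (v (X ∪ A i) - v X) := by
  classical
  induction I using Finset.induction_on with
  | empty => simp
  | @insert j I' hj ih =>
    rw [Finset.biUnion_insert, Finset.sum_insert hj]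
    have h1 := hsub (X ∪ A j) (X ∪ I'.biUnion A)
    have h2 : X ⊆ (X ∪ A j) ∩ (X ∪ I'.biUnion A) := by
      intro x hx; simp [hx]
    have h3 := hmono _ _ h2
    have h4 : X ∪ (A j ∪ I'.biUnion A) = (X ∪ A j) ∪ (X ∪ I'.biUnion A) := by
      ext x; simp; tauto
    rw [h4]
    linarith

private lemma poa_greedy_chain {α : Type*} [DecidableEq α]
    (v : Finset α → ℝ)
    (hmono : ∀ X Y : Finset α, X ⊆ Y → v X ≤ v Y)
    (T Ai : Finset α) (M : ℝ)
    (hM : ∀ B ⊆ Ai, ∑ b ∈ B, (v (B ∪ T) - v (B.erase b ∪ T)) ≤ M) :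
    ∀ B, B ⊆ Ai → v (B ∪ T) - v T ≤ (∑ t ∈ Finset.range B.card, (1 : ℝ) / (t + 1)) * M := by
  classical
  intro B
  induction B using Finset.strongInduction with
  | _ B ih =>
    intro hBA
    rcases B.eq_empty_or_nonempty with rfl | hne
    · simp
    · have hn : 0 < B.card := Finset.card_pos.mpr hne
      have hnR : (0 : ℝ) < (B.card : ℝ) := by exact_mod_cast hn
      -- there is an element of minimal marginal value
      have havg : ∑ b ∈ B, (v (B ∪ T) - v (B.erase b ∪ T)) ≤ ∑ _b ∈ B, M / B.card := by
        rw [Finset.sum_const, nsmul_eq_mul]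
        calc ∑ b ∈ B, (v (B ∪ T) - v (B.erase b ∪ T)) ≤ M := hM B hBA
          _ = (B.card : ℝ) * (M / B.card) := by field_simp
      obtain ⟨b, hbB, hb⟩ := Finset.exists_le_of_sum_le hne havg
      have hbsub : B.erase b ⊂ B := Finset.erase_ssubset hbB
      have hIH := ih (B.erase b) hbsub ((Finset.erase_subset _ _).trans hBA)
      have hcard : (B.erase b).card = B.card - 1 := Finset.card_erase_of_mem hbB
      have hsum : ∑ t ∈ Finset.range B.card, (1 : ℝ) / (t + 1)
          = (∑ t ∈ Finset.range (B.card - 1), (1 : ℝ) / (t + 1)) + 1 / B.card := by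
        conv_lhs => rw [show B.card = (B.card - 1) + 1 from (Nat.succ_pred_eq_of_pos hn).symm]
        rw [Finset.sum_range_succ]
        congr 2
        · push_cast [Nat.cast_sub hn]
          ring
      have hb' : v (B ∪ T) - v (B.erase b ∪ T) ≤ M / B.card := hb
      rw [hcard] at hIH
      rw [hsum]
      have : v (B ∪ T) - v T
          = (v (B ∪ T) - v (B.erase b ∪ T)) + (v (B.erase b ∪ T) - v T) := by ring
      rw [this]
      have hMrw : (1 / (B.card : ℝ)) * M = M / B.card := by ring
      calc (v (B ∪ T) - v (B.erase b ∪ T)) + (v (B.erase b ∪ T) - v T)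
          ≤ M / B.card + (∑ t ∈ Finset.range (B.card - 1), (1 : ℝ) / (t + 1)) * M := by
            exact add_le_add hb' hIH
        _ = ((∑ t ∈ Finset.range (B.card - 1), (1 : ℝ) / (t + 1)) + 1 / B.card) * M := by
            ring

private lemma poa_telescope {α : Type*} [DecidableEq α] {k : ℕ}
    (v : Finset α → ℝ)
    (hnn : ∀ T : Finset α, 0 ≤ v T)
    (hmono : ∀ X Y : Finset α, X ⊆ Y → v X ≤ v Y)
    (hsub : ∀ X Y : Finset α, v X + v Y ≥ v (X ∪ Y) + v (X ∩ Y))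
    (S : Fin k → Finset α) (Sall : Finset α)
    (hS : ∀ i, S i ⊆ Sall)
    (hdisjS : ∀ i j, i ≠ j → Disjoint (S i) (S j))
    (J : Finset (Fin k)) :
    ∑ i ∈ J, (v Sall - v (Sall \ S i)) ≤ v (J.biUnion S) := by
  classical
  induction J using Finset.induction_on with
  | empty => simpa using hnn ∅
  | @insert j J' hj ih =>
    rw [Finset.biUnion_insert, Finset.sum_insert hj]
    set X := J'.biUnion S with hX
    have hXsub : X ⊆ Sall \ S j := by
      intro x hx
      rw [hX, Finset.mem_biUnion] at hx
      obtain ⟨i, hiJ, hxi⟩ := hx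
      have hij : i ≠ j := fun h => hj (h ▸ hiJ)
      rw [Finset.mem_sdiff]
      exact ⟨hS i hxi, fun hxj => Finset.disjoint_left.mp (hdisjS i j hij) hxi hxj⟩
    have h1 := hsub (S j ∪ X) (Sall \ S j)
    have h2 : Sall ⊆ (S j ∪ X) ∪ (Sall \ S j) := by
      intro x hx
      by_cases hxj : x ∈ S j
      · exact Finset.mem_union_left _ (Finset.mem_union_left _ hxj)
      · exact Finset.mem_union_right _ (Finset.mem_sdiff.mpr ⟨hx, hxj⟩)
    have h3 : X ⊆ (S j ∪ X) ∩ (Sall \ S j) := fun x hx =>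
      Finset.mem_inter.mpr ⟨Finset.mem_union_right _ hx, hXsub hx⟩
    have h4 := hmono _ _ h2
    have h5 := hmono _ _ h3
    linarith

theorem poa_upper_bound {α : Type*} [DecidableEq α] [Fintype α]
    (k m : ℕ) (A : Fin k → Finset α)
    (hdisj : ∀ i j, i ≠ j → Disjoint (A i) (A j))
    (hcover : Finset.univ.biUnion A = (Finset.univ : Finset α))
    (hcard : ∀ i, (A i).card ≤ m)
    (v : Finset α → ℝ)
    (hnn : ∀ T : Finset α, 0 ≤ v T)
    (hmono : ∀ X Y : Finset α, X ⊆ Y → v X ≤ v Y)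
    (hsub : ∀ X Y : Finset α, v X + v Y ≥ v (X ∪ Y) + v (X ∩ Y))
    (hempty : v ∅ = 0)
    (S : Fin k → Finset α) (hSA : ∀ i, S i ⊆ A i)
    (Sall : Finset α) (hSall : Sall = Finset.univ.biUnion S)
    (heq : ∀ i : Fin k, ∀ B ⊆ A i,
      v Sall - v (Sall \ S i) ≥
        ∑ b ∈ B, (v (B ∪ (Sall \ S i)) - v (B.erase b ∪ (Sall \ S i)))) :
    v Finset.univ ≤ ((∑ t ∈ Finset.range m, (1 : ℝ) / (t + 1)) + 1) * v Sall := by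
  classical
  set Hm : ℝ := ∑ t ∈ Finset.range m, (1 : ℝ) / (t + 1) with hHm
  have hHm_nn : 0 ≤ Hm := Finset.sum_nonneg fun t _ => by positivity
  have hSsub : ∀ i, S i ⊆ Sall := by
    intro i
    rw [hSall]
    exact Finset.subset_biUnion_of_mem S (Finset.mem_univ i)
  have hdisjS : ∀ i j, i ≠ j → Disjoint (S i) (S j) := fun i j h =>
    ((hdisj i j h).mono (hSA i) (hSA j))
  set M : Fin k → ℝ := fun i => v Sall - v (Sall \ S i) with hMdef
  have hMnn : ∀ i, 0 ≤ M i := fun i =>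
    sub_nonneg.mpr (hmono _ _ Finset.sdiff_subset)
  -- Step A
  have stepA : v Finset.univ ≤ v Sall + ∑ i, (v (Sall ∪ A i) - v Sall) := by
    have h := poa_union_bound v hmono hsub A Sall Finset.univ
    rw [hcover] at h
    rwa [Finset.union_eq_right.mpr (Finset.subset_univ _)] at h
  -- Step B
  have stepB : ∀ i, v (Sall ∪ A i) - v Sall ≤ v (A i ∪ (Sall \ S i)) - v (Sall \ S i) := by
    intro i
    have h1 := hsub (A i ∪ (Sall \ S i)) Sall
    have h2 : Sall ∪ A i ⊆ (A i ∪ (Sall \ S i)) ∪ Sall := by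
      intro x hx
      rcases Finset.mem_union.mp hx with hx | hx
      · exact Finset.mem_union_right _ hx
      · exact Finset.mem_union_left _ (Finset.mem_union_left _ hx)
    have h3 : Sall \ S i ⊆ (A i ∪ (Sall \ S i)) ∩ Sall := fun x hx =>
      Finset.mem_inter.mpr ⟨Finset.mem_union_right _ hx,
        (Finset.sdiff_subset) hx⟩
    have h4 := hmono _ _ h2
    have h5 := hmono _ _ h3
    linarith
  -- Step C
  have stepC : ∀ i, v (A i ∪ (Sall \ S i)) - v (Sall \ S i) ≤ Hm * M i := by
    intro i
    have hchain := poa_greedy_chain v hmono (Sall \ S i) (A i) (M i)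
      (fun B hB => (heq i B hB)) (A i) (Finset.Subset.refl _)
    have hmonoH : (∑ t ∈ Finset.range (A i).card, (1 : ℝ) / (t + 1)) ≤ Hm := by
      rw [hHm]
      apply Finset.sum_le_sum_of_subset_of_nonneg
        (Finset.range_subset_range.mpr (hcard i))
      intro t _ _
      positivity
    calc v (A i ∪ (Sall \ S i)) - v (Sall \ S i)
        ≤ (∑ t ∈ Finset.range (A i).card, (1 : ℝ) / (t + 1)) * M i := hchain
      _ ≤ Hm * M i := mul_le_mul_of_nonneg_right hmonoH (hMnn i)
  -- Step D
  have stepD : ∑ i, M i ≤ v Sall := by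
    have h := poa_telescope v hnn hmono hsub S Sall hSsub hdisjS Finset.univ
    rwa [← hSall] at h
  -- combine
  have hsumC : ∑ i, (v (Sall ∪ A i) - v Sall) ≤ Hm * v Sall := by
    calc ∑ i, (v (Sall ∪ A i) - v Sall)
        ≤ ∑ i, Hm * M i := Finset.sum_le_sum fun i _ =>
          le_trans (stepB i) (stepC i)
      _ = Hm * ∑ i, M i := by rw [Finset.mul_sum]
      _ ≤ Hm * v Sall := mul_le_mul_of_nonneg_left stepD hHm_nn
  calc v Finset.univ ≤ v Sall + ∑ i, (v (Sall ∪ A i) - v Sall) := stepA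
    _ ≤ v Sall + Hm * v Sall := by linarith
    _ = (Hm + 1) * v Sall := by ring
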